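/- For all p, q ∈ ℕ, every ω = (ω_0, ω′) ∈ ℝ^{1+p+q} with Q_{1+p,q}(ω) = 1 and ω_0 ≠ −1, and all v, w ∈ ℝ^{1+p+q} tangent to the quadric S^{p,q} at ω (i.e. with B_{1+p,q}(ω, v) = B_{1+p,q}(ω, w) = 0): B_{p,q}((DΨ)_ω(v), (DΨ)_ω(w)) = (4/(1+ω_0)²) · B_{1+p,q}(v, w), where (DΨ)_ω is the Fréchet derivative at ω of the map Ψ defined on the open set {ω_0 ≠ −1} of ℝ^{1+p+q}. (Lemma 3.1: Ψ*g_{ℝ^{p,q}} = 4/(1+ω_0)² · g_{S^{p,q}}.) -/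

import Mathlib

open scoped BigOperators

noncomputable section

/-- The bilinear form of signature `(p, n-p)` on `ℝ^n`:
`B(z,z') = ∑_{i < p} z_i z'_i - ∑_{i ≥ p} z_i z'_i`.  For `n = p + q` this is
`B_{p,q}`, and for `n = 1 + p + q` with first parameter `p + 1` it is `B_{1+p,q}`. -/
def Bsgn {n : ℕ} (p : ℕ) (z z' : Fin n → ℝ) : ℝ :=
  ∑ i : Fin n, (if (i : ℕ) < p then (1 : ℝ) else -1) * z i * z' i

/-- The quadratic form `Q(z) = B(z,z)`. -/
def Qsgn {n : ℕ} (p : ℕ) (z : Fin n → ℝ) : ℝ := Bsgn p z z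

/-- The stereographic-type map `Φ(z) = (4 - Q(z), 4z)/(Q(z)+4)` from
`(ℝ^{p,q})' = {Q_{p,q} ≠ -4}` to the space form `S^{p,q} ⊂ ℝ^{1+p+q}`. -/
def PhiMap (p q : ℕ) (z : Fin (p + q) → ℝ) : Fin (p + q + 1) → ℝ :=
  fun i => (Qsgn p z + 4)⁻¹ *
    (Fin.cons (4 - Qsgn p z) (fun j => 4 * z j) : Fin (p + q + 1) → ℝ) i

/-- The inverse map `Ψ(ω₀, ω') = (2/(1+ω₀)) ω'`. -/
def PsiMap (p q : ℕ) (ω : Fin (p + q + 1) → ℝ) : Fin (p + q) → ℝ :=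
  fun i => (2 / (1 + ω 0)) * ω i.succ

lemma psi_hasFDerivAt (p q : ℕ) (ω : Fin (p + q + 1) → ℝ) (h : (1 : ℝ) + ω 0 ≠ 0) :
    HasFDerivAt (PsiMap p q)
      (ContinuousLinearMap.pi fun i : Fin (p + q) =>
        (2 / (1 + ω 0)) • ContinuousLinearMap.proj i.succ
          + (-(2 * ω i.succ) / (1 + ω 0) ^ 2) •
              ContinuousLinearMap.proj (R := ℝ) (φ := fun _ : Fin (p+q+1) => ℝ) 0) ω := by
  apply hasFDerivAt_pi.2
  intro i
  have h0 : HasFDerivAt (fun ω : Fin (p + q + 1) → ℝ => ω 0)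
      (ContinuousLinearMap.proj (R := ℝ) (φ := fun _ : Fin (p + q + 1) => ℝ) 0) ω :=
    hasFDerivAt_apply 0 ω
  have ha : HasDerivAt (fun t : ℝ => 2 / (1 + t)) (-2 / (1 + ω 0) ^ 2) (ω 0) := by
    have h2 := (((hasDerivAt_id (ω 0)).const_add 1).inv h).const_mul (2 : ℝ)
    convert h2 using 1
    · rfl
    · rfl
    · funext t; simp [div_eq_mul_inv]
    · simp only [id_eq]
      ring
  have h3 := ha.comp_hasFDerivAt ω h0
  have h4 : HasFDerivAt (fun ω : Fin (p + q + 1) → ℝ => ω i.succ)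
      (ContinuousLinearMap.proj (R := ℝ) (φ := fun _ : Fin (p + q + 1) => ℝ) i.succ) ω :=
    hasFDerivAt_apply i.succ ω
  have h5 := h3.mul h4
  convert h5 using 1
  · rfl
  · rfl
  ext u
  simp [Function.comp]
  ring

lemma psi_fderiv_apply (p q : ℕ) (ω : Fin (p + q + 1) → ℝ) (h : (1 : ℝ) + ω 0 ≠ 0)
    (u : Fin (p + q + 1) → ℝ) (i : Fin (p + q)) :
    fderiv ℝ (PsiMap p q) ω u i
      = 2 / (1 + ω 0) * u i.succ - 2 * ω i.succ / (1 + ω 0) ^ 2 * u 0 := by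
  rw [(psi_hasFDerivAt p q ω h).fderiv]
  simp [ContinuousLinearMap.pi_apply]
  ring

theorem stmt14 (p q : ℕ) (ω : Fin (p + q + 1) → ℝ) (hω : Qsgn (p + 1) ω = 1)
    (hω0 : ω 0 ≠ -1) (v w : Fin (p + q + 1) → ℝ)
    (hv : Bsgn (p + 1) ω v = 0) (hw : Bsgn (p + 1) ω w = 0) :
    Bsgn p (fderiv ℝ (PsiMap p q) ω v) (fderiv ℝ (PsiMap p q) ω w)
      = (4 / (1 + ω 0) ^ 2) * Bsgn (p + 1) v w := by
  have hc : (1 : ℝ) + ω 0 ≠ 0 := fun hcc => hω0 (by linarith)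
  unfold Qsgn at hω
  unfold Bsgn at hv hw hω ⊢
  rw [Fin.sum_univ_succ] at hv hw hω ⊢
  simp only [Fin.val_zero, Fin.val_succ, Nat.zero_lt_succ, if_pos, Nat.succ_lt_succ_iff,
    Nat.add_lt_add_iff_right, one_mul] at hv hw hω ⊢
  simp only [psi_fderiv_apply p q ω hc]
  have hSv : ∑ i : Fin (p + q), (if (i : ℕ) < p then (1 : ℝ) else -1) * ω i.succ * v i.succ
      = -(ω 0 * v 0) := by linarith
  have hSw : ∑ i : Fin (p + q), (if (i : ℕ) < p then (1 : ℝ) else -1) * ω i.succ * w i.succ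
      = -(ω 0 * w 0) := by linarith
  have hSω : ∑ i : Fin (p + q), (if (i : ℕ) < p then (1 : ℝ) else -1) * ω i.succ * ω i.succ
      = 1 - ω 0 * ω 0 := by linarith
  obtain ⟨c, hcdef⟩ : ∃ c : ℝ, c = 1 + ω 0 := ⟨_, rfl⟩
  rw [← hcdef] at hc ⊢
  have expand : ∑ i : Fin (p + q), (if (i : ℕ) < p then (1 : ℝ) else -1) *
        (2 / c * v i.succ - 2 * ω i.succ / c ^ 2 * v 0) *
        (2 / c * w i.succ - 2 * ω i.succ / c ^ 2 * w 0)
      = (4 / c ^ 2) *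
          ∑ i : Fin (p + q), (if (i : ℕ) < p then (1 : ℝ) else -1) * v i.succ * w i.succ
        + (-(4 * w 0) / c ^ 3) *
          ∑ i : Fin (p + q), (if (i : ℕ) < p then (1 : ℝ) else -1) * ω i.succ * v i.succ
        + (-(4 * v 0) / c ^ 3) *
          ∑ i : Fin (p + q), (if (i : ℕ) < p then (1 : ℝ) else -1) * ω i.succ * w i.succ
        + (4 * v 0 * w 0 / c ^ 4) *
          ∑ i : Fin (p + q), (if (i : ℕ) < p then (1 : ℝ) else -1) * ω i.succ * ω i.succ := by
    rw [Finset.mul_sum, Finset.mul_sum, Finset.mul_sum, Finset.mul_sum,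
      ← Finset.sum_add_distrib, ← Finset.sum_add_distrib, ← Finset.sum_add_distrib]
    refine Finset.sum_congr rfl fun i _ => ?_
    ring
  rw [expand, hSv, hSw, hSω]
  field_simp
  rw [hcdef]
  ring
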